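/- Let μ > 0 and F ∈ ℝ³. Define the 3D Stokeslet velocity u_δ(x) = (1/(8πμ))·(F/|x| + ((x·F)/|x|³)·x) and pressure p_δ(x) = (1/(4π))·(x·F)/|x|³ for x ∈ ℝ³ \ {0}. Then for every x ∈ ℝ³ with x ≠ 0, the pair (u_δ, p_δ) satisfies the homogeneous Stokes equation pointwise: μ·Δu_δ(x) = ∇p_δ(x), where Δ acts componentwise on the vector field u_δ. -/

import Mathlib

open Real MeasureTheory

noncomputable section

/-- Euclidean inner product on `Fin d → ℝ`. -/
def dot {d : ℕ} (x y : Fin d → ℝ) : ℝ := ∑ i, x i * y i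

/-- Euclidean norm on `Fin d → ℝ`. -/
def eunorm {d : ℕ} (x : Fin d → ℝ) : ℝ := Real.sqrt (∑ i, (x i) ^ 2)

/-- `i`-th partial derivative of a scalar field. -/
def pd {d : ℕ} (i : Fin d) (f : (Fin d → ℝ) → ℝ) (x : Fin d → ℝ) : ℝ :=
  fderiv ℝ f x (Pi.single i 1)

/-- Laplacian (sum of second partial derivatives) of a scalar field. -/
def lap {d : ℕ} (f : (Fin d → ℝ) → ℝ) (x : Fin d → ℝ) : ℝ :=
  ∑ i, pd i (fun y => pd i f y) x

/-- Divergence of a vector field. -/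
def divg {d : ℕ} (u : (Fin d → ℝ) → (Fin d → ℝ)) (x : Fin d → ℝ) : ℝ :=
  ∑ i, pd i (fun y => u y i) x

/-- 3D Stokeslet velocity. -/
def udelta3 (μ : ℝ) (F : Fin 3 → ℝ) (x : Fin 3 → ℝ) : Fin 3 → ℝ :=
  fun j => (1 / (8 * π * μ)) *
    (F j / eunorm x + (dot x F / (eunorm x) ^ 3) * x j)

/-- 3D Stokeslet pressure. -/
def pdelta3 (F : Fin 3 → ℝ) (x : Fin 3 → ℝ) : ℝ :=
  (1 / (4 * π)) * (dot x F / (eunorm x) ^ 3)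

namespace StokesAux

abbrev V := Fin 3 → ℝ

def q (y : V) : ℝ := ∑ k, (y k) ^ 2

lemma q_nonneg (y : V) : 0 ≤ q y := Finset.sum_nonneg fun _ _ => sq_nonneg _

lemma q_pos {y : V} (hy : y ≠ 0) : 0 < q y := by
  rcases Function.ne_iff.1 hy with ⟨k, hk⟩
  have h1 : (0:ℝ) < (y k)^2 := by
    have : y k ≠ 0 := by simpa using hk
    positivity
  exact lt_of_lt_of_le h1 (Finset.single_le_sum (fun i _ => sq_nonneg (y i)) (Finset.mem_univ k))

lemma eunorm_def (y : V) : eunorm y = Real.sqrt (q y) := rfl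
lemma sq_eunorm (y : V) : eunorm y ^ 2 = q y := Real.sq_sqrt (q_nonneg y)
lemma eunorm_pos {y : V} (hy : y ≠ 0) : 0 < eunorm y := Real.sqrt_pos.2 (q_pos hy)
lemma eunorm_ne {y : V} (hy : y ≠ 0) : eunorm y ≠ 0 := (eunorm_pos hy).ne'

def Dq (y : V) : V →L[ℝ] ℝ := ∑ k, ((2:ℝ) * y k ^ 1) • ContinuousLinearMap.proj k
def DF (F : V) : V →L[ℝ] ℝ := ∑ k, (F k) • ContinuousLinearMap.proj k

@[simp] lemma Dq_single (y : V) (i : Fin 3) : Dq y (Pi.single i 1) = 2 * y i := by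
  simp [Dq, ContinuousLinearMap.sum_apply, Pi.single_apply]

@[simp] lemma DF_single (F : V) (i : Fin 3) : DF F (Pi.single i 1) = F i := by
  simp [DF, ContinuousLinearMap.sum_apply, Pi.single_apply]

lemma hasFDerivAt_q (y : V) : HasFDerivAt q (Dq y) y := by
  apply HasFDerivAt.fun_sum
  intro k _
  exact (hasDerivAt_pow 2 (y k)).comp_hasFDerivAt (f := fun z : V => z k) y (hasFDerivAt_apply k y)

lemma hasFDerivAt_dotF (F : V) (y : V) : HasFDerivAt (fun z => dot z F) (DF F) y := by
  apply HasFDerivAt.fun_sum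
  intro k _
  exact (hasFDerivAt_apply k y).mul_const (F k)

lemma pd_div_pow {N : V → ℝ} {N' : V →L[ℝ] ℝ} (i : Fin 3) (n : ℕ) {y : V} (hy : y ≠ 0)
    (hN : HasFDerivAt N N' y) :
    pd i (fun z => N z / eunorm z ^ (n+1)) y
      = (N' (Pi.single i 1) * q y - (n+1) * N y * y i) / eunorm y ^ (n+3) := by
  have hr0 := eunorm_ne hy
  have hq0 := (q_pos hy).ne'
  have hr : HasFDerivAt eunorm ((1 / (2 * Real.sqrt (q y))) • Dq y) y :=
    (hasFDerivAt_q y).sqrt hq0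
  have h1 : HasDerivAt (fun t : ℝ => (t ^ (n+1))⁻¹)
      (-((n+1:ℝ) * eunorm y ^ n) / (eunorm y ^ (n+1))^2) (eunorm y) := by
    have := (hasDerivAt_pow (n+1) (eunorm y)).fun_inv (pow_ne_zero _ hr0)
    refine this.congr_deriv ?_
    push_cast
    ring
  have hinv := h1.comp_hasFDerivAt y hr
  simp only [Function.comp_def] at hinv
  have hmul := hN.fun_mul hinv
  have heq : (fun z => N z / eunorm z ^ (n+1)) = fun z => N z * (eunorm z ^ (n+1))⁻¹ := by
    funext z; rw [div_eq_mul_inv]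
  rw [pd, heq, hmul.fderiv]
  simp only [ContinuousLinearMap.add_apply, ContinuousLinearMap.smul_apply, smul_eq_mul,
    Dq_single, Function.comp]
  rw [← eunorm_def, ← sq_eunorm y]
  field_simp
  ring

def dlt (i j : Fin 3) : ℝ := if i = j then 1 else 0

def N1 (μ : ℝ) (F : V) (j : Fin 3) (z : V) : ℝ :=
  (1/(8*π*μ)) * (F j * q z + dot z F * z j)

def A (μ : ℝ) (F : V) (i j : Fin 3) (z : V) : ℝ :=
  (1/(8*π*μ)) * (2 * F j * z i + F i * z j + dot z F * dlt i j)

def G (μ : ℝ) (F : V) (i j : Fin 3) (z : V) : ℝ :=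
  A μ F i j z * q z - 3 * N1 μ F j z * z i

lemma hasFDerivAt_N1 (μ : ℝ) (F : V) (j : Fin 3) (y : V) :
    HasFDerivAt (N1 μ F j)
      ((1/(8*π*μ)) • ((F j) • Dq y + ((dot y F) • ContinuousLinearMap.proj j + (y j) • DF F))) y :=
  (((hasFDerivAt_q y).const_mul (F j)).add
    ((hasFDerivAt_dotF F y).mul (hasFDerivAt_apply j y))).const_mul (1/(8*π*μ))

lemma mem_nhds_ne {y : V} (hy : y ≠ 0) : {z : V | z ≠ 0} ∈ nhds y :=
  isOpen_compl_singleton.mem_nhds (by simpa using hy)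

lemma pd_u (μ : ℝ) (F : V) (i j : Fin 3) {y : V} (hy : y ≠ 0) :
    pd i (fun z => udelta3 μ F z j) y = G μ F i j y / eunorm y ^ 5 := by
  have hEq : (fun z => udelta3 μ F z j) =ᶠ[nhds y] (fun z => N1 μ F j z / eunorm z ^ 3) := by
    filter_upwards [mem_nhds_ne hy] with z hz
    have h1 := eunorm_ne hz
    unfold udelta3 N1
    rw [← sq_eunorm z, mul_div_assoc]
    congr 1
    field_simp
  rw [pd, hEq.fderiv_eq, ← pd]
  have h5 := pd_div_pow i 2 hy (hasFDerivAt_N1 μ F j y)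
  norm_num at h5
  rw [h5]
  unfold G A N1 dlt
  rcases eq_or_ne i j with h | h
  · subst h
    simp [Pi.single_apply]
    ring
  · simp [Pi.single_apply, h, Ne.symm h]
    ring

end StokesAux

namespace StokesAux

def H (μ : ℝ) (F : V) (i j : Fin 3) (x : V) : ℝ :=
  (((1/(8*π*μ)) * (2*F j + 2 * F i * dlt i j) * q x + 2 * A μ F i j x * x i
    - 3 * (A μ F i j x * x i + N1 μ F j x)) * q x - 5 * G μ F i j x * x i) / eunorm x ^ 7

lemma pd_pd_u (μ : ℝ) (F : V) (i j : Fin 3) {x : V} (hx : x ≠ 0) :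
    pd i (fun z => pd i (fun w => udelta3 μ F w j) z) x = H μ F i j x := by
  have hEq : (fun z => pd i (fun w => udelta3 μ F w j) z)
      =ᶠ[nhds x] (fun z => G μ F i j z / eunorm z ^ 5) := by
    filter_upwards [mem_nhds_ne hx] with z hz using pd_u μ F i j hz
  rw [pd, hEq.fderiv_eq, ← pd]
  have hA : HasFDerivAt (A μ F i j) _ x :=
    ((((hasFDerivAt_apply i x).const_mul (2*F j)).add
      ((hasFDerivAt_apply j x).const_mul (F i))).add
      ((hasFDerivAt_dotF F x).mul_const (dlt i j))).const_mul (1/(8*π*μ))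
  have hN1 := hasFDerivAt_N1 μ F j x
  have hG : HasFDerivAt (G μ F i j) _ x :=
    (hA.mul (hasFDerivAt_q x)).sub ((hN1.const_mul 3).mul (hasFDerivAt_apply i x))
  have h7 := pd_div_pow i 4 hx hG
  norm_num at h7
  rw [h7]
  unfold H G A N1 dlt
  rcases eq_or_ne i j with h | h
  · subst h
    simp [Pi.single_apply]
    ring
  · simp [Pi.single_apply, h, Ne.symm h]
    ring

lemma pd_p (F : V) (j : Fin 3) {x : V} (hx : x ≠ 0) :
    pd j (pdelta3 F) x
      = ((1/(4*π)) * F j * q x - 3 * ((1/(4*π)) * dot x F) * x j) / eunorm x ^ 5 := by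
  have heq : pdelta3 F = fun z => ((1/(4*π)) * dot z F) / eunorm z ^ 3 := by
    funext z; unfold pdelta3; rw [mul_div_assoc]
  rw [heq]
  have hN : HasFDerivAt (fun z => (1/(4*π)) * dot z F) _ x :=
    (hasFDerivAt_dotF F x).const_mul (1/(4*π))
  have h3 := pd_div_pow j 2 hx hN
  norm_num only at h3
  rw [h3]
  simp

end StokesAux


set_option maxHeartbeats 1000000 in
open StokesAux in
/-- The 3D Stokeslet satisfies the homogeneous Stokes equation `μ Δu = ∇p`
pointwise away from the origin. -/
theorem stokeslet3d_stokes_eq (μ : ℝ) (hμ : 0 < μ) (F : Fin 3 → ℝ)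
    (x : Fin 3 → ℝ) (hx : x ≠ 0) :
    ∀ j : Fin 3, μ * lap (fun y => udelta3 μ F y j) x = pd j (pdelta3 F) x := by
  intro j
  have hr0 := eunorm_ne hx
  have hπ := Real.pi_ne_zero
  have hμ' := hμ.ne'
  have hQ : x 0 ^ 2 + x 1 ^ 2 + x 2 ^ 2 ≠ 0 := by
    have h := q_pos hx
    unfold q at h
    rw [Fin.sum_univ_three] at h
    exact h.ne'
  unfold lap
  rw [Fin.sum_univ_three]
  rw [pd_pd_u μ F 0 j hx, pd_pd_u μ F 1 j hx, pd_pd_u μ F 2 j hx, pd_p F j hx]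
  have e7 : eunorm x ^ 7 = eunorm x ^ 5 * q x := by rw [← sq_eunorm]; ring
  unfold H G A N1
  rw [e7]
  unfold q dot dlt
  fin_cases j <;>
  · simp only [Fin.zero_eta, Fin.mk_one, Fin.reduceFinMk, Fin.isValue, Fin.reduceEq, reduceIte, Fin.sum_univ_three]
    field_simp
    ring
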